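/- Let γ > 1, 0 < k < 1, G(π) = (1-π)·(π/(1-π))^γ on (0,1), and b₁ = γk/(γ+k-1). Define V̂₁(π) = π - k for π ≥ b₁ and V̂₁(π) = ((b₁-k)/G(b₁))·G(π) for π < b₁. Then V̂₁ is continuously differentiable on (0,1). -/

import Mathlib

open Set

theorem stmt_7 (γ k : ℝ) (hγ : 1 < γ) (hk0 : 0 < k) (hk1 : k < 1)
    (G : ℝ → ℝ) (hG : ∀ π ∈ Ioo (0:ℝ) 1, G π = (1 - π) * (π / (1 - π)) ^ γ)
    (b₁ : ℝ) (hb : b₁ = γ * k / (γ + k - 1))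
    (V : ℝ → ℝ)
    (hV : ∀ π : ℝ, V π = if b₁ ≤ π then π - k else ((b₁ - k) / G b₁) * G π) :
    ContDiffOn ℝ 1 V (Ioo (0:ℝ) 1) := by
  have hD : 0 < γ + k - 1 := by linarith
  have hb₁0 : 0 < b₁ := by
    rw [hb]; positivity
  have hb₁1 : b₁ < 1 := by
    rw [hb, div_lt_one hD]; nlinarith
  have hkb : k < b₁ := by
    rw [hb, lt_div_iff₀ hD]; nlinarith
  have hfit : (b₁ - k) * (γ - b₁) = b₁ * (1 - b₁) := by
    subst hb; field_simp; ring
  set F : ℝ → ℝ := fun x => (1 - x) * (x / (1 - x)) ^ γ with hF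
  set F' : ℝ → ℝ := fun x => (x / (1 - x)) ^ γ * ((γ - x) / x) with hF'
  set c : ℝ := (b₁ - k) / G b₁ with hc
  set f : ℝ → ℝ := fun x => if b₁ ≤ x then 1 else c * F' x with hf
  have hb₁mem : b₁ ∈ Ioo (0:ℝ) 1 := ⟨hb₁0, hb₁1⟩
  have h1b : 0 < 1 - b₁ := by linarith
  have hRpos : (0:ℝ) < (b₁ / (1 - b₁)) ^ γ := Real.rpow_pos_of_pos (div_pos hb₁0 h1b) γ
  have hGb : G b₁ = (1 - b₁) * (b₁ / (1 - b₁)) ^ γ := hG b₁ hb₁mem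
  have hGbpos : 0 < G b₁ := by rw [hGb]; positivity
  -- derivative of F on (0,1)
  have hFd : ∀ x ∈ Ioo (0:ℝ) 1, HasDerivAt F (F' x) x := by
    intro x hx
    obtain ⟨hx0, hx1⟩ := hx
    have h1x : 0 < 1 - x := by linarith
    have hden : HasDerivAt (fun y : ℝ => 1 - y) (-1) x := by
      simpa using (hasDerivAt_id x).const_sub 1
    have hu : HasDerivAt (fun y : ℝ => y / (1 - y))
        ((1 * (1 - x) - x * (-1)) / (1 - x) ^ 2) x :=
      (hasDerivAt_id x).div hden h1x.ne'
    have hupos : 0 < x / (1 - x) := div_pos hx0 h1x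
    have hr : HasDerivAt (fun y : ℝ => (y / (1 - y)) ^ γ)
        ((1 * (1 - x) - x * (-1)) / (1 - x) ^ 2 * γ * (x / (1 - x)) ^ (γ - 1)) x :=
      hu.rpow_const (Or.inl hupos.ne')
    have hprod := hden.mul hr
    have hx' : x ≠ 0 := hx0.ne'
    have h1x' : (1 : ℝ) - x ≠ 0 := h1x.ne'
    have hA : (x / (1 - x)) ^ (γ - 1) = (x / (1 - x)) ^ γ * (1 - x) / x := by
      rw [Real.rpow_sub_one hupos.ne' γ, div_div_eq_mul_div]
    refine hprod.congr_deriv ?_; symm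
    rw [hA]
    show (x / (1 - x)) ^ γ * ((γ - x) / x) = _
    generalize (x / (1 - x)) ^ γ = A
    field_simp
    ring
  have hFbeq : c * F b₁ = b₁ - k := by
    rw [hc, hF]
    simp only
    rw [← hGb, div_mul_cancel₀ _ hGbpos.ne']
  have hcfit : c * F' b₁ = 1 := by
    rw [hc, hF', hGb]
    simp only
    rw [div_mul_eq_mul_div, div_eq_one_iff_eq (by positivity)]
    field_simp
    linear_combination hfit
  -- V has derivative f x at every x in (0,1)
  have hd : ∀ x ∈ Ioo (0:ℝ) 1, HasDerivAt V (f x) x := by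
    intro x hx
    obtain ⟨hx0, hx1⟩ := hx
    rcases lt_trichotomy x b₁ with hlt | heq | hgt
    · have hfx : f x = c * F' x := if_neg (not_le.mpr hlt)
      rw [hfx]
      have hdF : HasDerivAt (fun y => c * F y) (c * F' x) x :=
        (hFd x ⟨hx0, hx1⟩).const_mul c
      apply hdF.congr_of_eventuallyEq
      have hopen : IsOpen (Ioo (0:ℝ) 1 ∩ Iio b₁) := isOpen_Ioo.inter isOpen_Iio
      have hxmem : x ∈ Ioo (0:ℝ) 1 ∩ Iio b₁ := ⟨⟨hx0, hx1⟩, hlt⟩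
      filter_upwards [hopen.mem_nhds hxmem] with y hy
      rw [hV y, if_neg (not_le.mpr hy.2), hG y hy.1]
    · subst heq
      have hfx : f x = 1 := if_pos le_rfl
      rw [hfx]
      have h1 : HasDerivWithinAt V 1 (Ioc 0 x) x := by
        have hdF : HasDerivAt (fun y => c * F y) (c * F' x) x :=
          (hFd x ⟨hx0, hx1⟩).const_mul c
        have : HasDerivWithinAt (fun y => c * F y) 1 (Ioc 0 x) x := by
          rw [← hcfit]; exact hdF.hasDerivWithinAt
        apply this.congr
        · intro y hy
          rcases eq_or_lt_of_le hy.2 with h | h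
          · subst h; rw [hV y, if_pos le_rfl, hFbeq]
          · rw [hV y, if_neg (not_le.mpr h), hG y ⟨hy.1, lt_trans h hx1⟩]
        · rw [hV x, if_pos le_rfl, hFbeq]
      have h2 : HasDerivWithinAt V 1 (Ici x) x := by
        have : HasDerivWithinAt (fun y : ℝ => y - k) 1 (Ici x) x :=
          ((hasDerivAt_id x).sub_const k).hasDerivWithinAt
        apply this.congr
        · intro y hy; rw [hV y, if_pos (mem_Ici.mp hy)]
        · rw [hV x, if_pos le_rfl]
      have h3 := h1.union h2
      rw [Ioc_union_Ici_eq_Ioi hx0] at h3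
      exact h3.hasDerivAt (Ioi_mem_nhds hx0)
    · have hfx : f x = 1 := if_pos hgt.le
      rw [hfx]
      have hdl : HasDerivAt (fun y : ℝ => y - k) 1 x :=
        (hasDerivAt_id x).sub_const k
      apply hdl.congr_of_eventuallyEq
      filter_upwards [Ioi_mem_nhds hgt] with y hy
      rw [hV y, if_pos (le_of_lt (mem_Ioi.mp hy))]
  -- continuity of f on (0,1)
  have hfcont : ContinuousOn f (Ioo (0:ℝ) 1) := by
    rw [hf]
    apply ContinuousOn.if
    · intro a ha
      have : a = b₁ := by
        have := ha.2
        rw [show {a : ℝ | b₁ ≤ a} = Ici b₁ from rfl, frontier_Ici] at this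
        exact this
      subst this
      simp [hcfit]
    · exact continuousOn_const
    · apply ContinuousOn.mono _ (inter_subset_left)
      have hbase : ContinuousOn (fun x : ℝ => x / (1 - x)) (Ioo (0:ℝ) 1) := by
        apply ContinuousOn.div continuousOn_id
          (continuous_const.sub continuous_id).continuousOn
        intro x hx h
        have h' : (1:ℝ) - x = 0 := by simpa using h
        have := hx.2
        linarith
      have hF'cont : ContinuousOn F' (Ioo (0:ℝ) 1) := by
        rw [hF']
        apply ContinuousOn.mul
        · exact hbase.rpow_const (fun x _ => Or.inr (le_of_lt (lt_trans zero_lt_one hγ)))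
        · exact ((continuous_const.sub continuous_id).continuousOn).div continuousOn_id
            (fun x hx => ne_of_gt hx.1)
      exact continuousOn_const.mul hF'cont
  -- assemble
  rw [show (1 : WithTop ℕ∞) = 0 + 1 from rfl,
    contDiffOn_succ_iff_deriv_of_isOpen isOpen_Ioo]
  refine ⟨fun x hx => (hd x hx).differentiableAt.differentiableWithinAt, ?_, ?_⟩
  · intro h; simp at h
  · rw [contDiffOn_zero]
    exact hfcont.congr (fun x hx => (hd x hx).deriv)
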